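/- For the Kuramoto model with symmetric coupling matrix J and common natural frequency ω, the time derivative of the energy along any solution equals a negative sum of squares: d/dt [U(φ(t))] = −2 · Σ_i (Σ_j J i j · sin(φ_i(t) − φ_j(t)))² for all t. -/

import Mathlib

/-- for the Kuramoto model with symmetric coupling matrix `J` and
common natural frequency `ω`, the time derivative of the energy along any
solution equals a negative sum of squares:
`d/dt U(φ(t)) = −2 · Σ_i (Σ_j J i j · sin(φ_i(t) − φ_j(t)))²`. -/
theorem kuramoto_energy_deriv
    {n : ℕ} (J : Fin n → Fin n → ℝ) (hJ : ∀ i j, J i j = J j i) (ω : ℝ)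
    (φ : Fin n → ℝ → ℝ)
    -- each phase is differentiable and satisfies the Kuramoto ODE
    (hode : ∀ i t, HasDerivAt (φ i)
      (ω + ∑ j, J i j * Real.sin (φ j t - φ i t)) t) :
    ∀ t, HasDerivAt (fun t => ∑ i, ∑ j, J i j * (1 - Real.cos (φ i t - φ j t)))
      (-2 * ∑ i, (∑ j, J i j * Real.sin (φ i t - φ j t)) ^ 2) t := by
  intro t
  have hsin : ∀ a b : ℝ, Real.sin (a - b) = -Real.sin (b - a) := by
    intro a b; rw [← neg_sub, Real.sin_neg]
  set D : Fin n → ℝ := fun i => ω + ∑ j, J i j * Real.sin (φ j t - φ i t) with hD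
  set S : Fin n → ℝ := fun i => ∑ j, J i j * Real.sin (φ i t - φ j t) with hS
  have key : HasDerivAt (fun t => ∑ i, ∑ j, J i j * (1 - Real.cos (φ i t - φ j t)))
      (∑ i, ∑ j, J i j * (Real.sin (φ i t - φ j t) * (D i - D j))) t := by
    apply HasDerivAt.fun_sum
    intro i _
    apply HasDerivAt.fun_sum
    intro j _
    have h := (((hode i t).fun_sub (hode j t)).cos.const_sub 1).const_mul (J i j)
    convert h using 1
    · rfl
    simp only [hD]
    ring
  convert key using 1
  have hDS : ∀ i, D i = ω - S i := by
    intro i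
    simp only [hD, hS]
    rw [sub_eq_add_neg, ← Finset.sum_neg_distrib]
    congr 1
    refine Finset.sum_congr rfl fun j _ => ?_
    rw [hsin (φ j t) (φ i t)]; ring
  have hsplit : ∀ i j, J i j * (Real.sin (φ i t - φ j t) * (D i - D j))
      = J i j * Real.sin (φ i t - φ j t) * D i
        - J i j * Real.sin (φ i t - φ j t) * D j := by intro i j; ring
  simp only [hsplit, Finset.sum_sub_distrib]
  have hswap : ∑ i, ∑ j, J i j * Real.sin (φ i t - φ j t) * D j
      = -∑ i, ∑ j, J i j * Real.sin (φ i t - φ j t) * D i := by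
    have h1 : (∑ i, ∑ j, J i j * Real.sin (φ i t - φ j t) * D j)
        = ∑ j, ∑ i, J i j * Real.sin (φ i t - φ j t) * D j := Finset.sum_comm
    rw [h1, ← Finset.sum_neg_distrib]
    refine Finset.sum_congr rfl fun a _ => ?_
    rw [← Finset.sum_neg_distrib]
    refine Finset.sum_congr rfl fun b _ => ?_
    rw [hJ b a, hsin (φ b t) (φ a t)]; ring
  rw [hswap]
  have hSi : ∀ i, ∑ j, J i j * Real.sin (φ i t - φ j t) * D i = S i * D i := by
    intro i; rw [hS, ← Finset.sum_mul]
  simp only [hSi, sub_neg_eq_add, ← two_mul]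
  have hsum0 : ∑ i, S i = 0 := by
    have h1 : ∑ i, S i = ∑ a, ∑ b, J b a * Real.sin (φ b t - φ a t) := by
      simp only [hS]; exact Finset.sum_comm
    have h2 : ∑ a, ∑ b, J b a * Real.sin (φ b t - φ a t) = -∑ i, S i := by
      simp only [hS]
      rw [← Finset.sum_neg_distrib]
      refine Finset.sum_congr rfl fun a _ => ?_
      rw [← Finset.sum_neg_distrib]
      refine Finset.sum_congr rfl fun b _ => ?_
      rw [hJ b a, hsin (φ b t) (φ a t)]; ring
    have := h1.trans h2
    linarith
  have hfin : ∑ i, S i * D i = ∑ i, (ω * S i - S i ^ 2) :=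
    Finset.sum_congr rfl fun i _ => by rw [hDS i]; ring
  rw [hfin, Finset.sum_sub_distrib, ← Finset.mul_sum, hsum0]
  ring
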